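/- Let n ≥ 2 be even with k = n/2 odd, let N ≥ 2, set ω = exp(2πi/n), and let η_1, …, η_{2N} be elements of an associative unital ℂ-algebra, indexed cyclically mod 2N, satisfying η_j η_{j+1} = ω^{ε_j} η_{j+1} η_j for all j, where each ε_j ∈ {+1, −1} may depend on j, together with η_j η_k = η_k η_j whenever k ≢ j±1 (mod 2N), and η_j^n = 1 for all j. Then A₀ = Σ_{j=1}^{N} η_{2j−1}^k and A₁ = Σ_{j=1}^{N} η_{2j}^k satisfy the Dolan–Grady condition with constant C = 16, i.e. [A₀,[A₀,[A₀,A₁]]] = 16·[A₀,A₁] and [A₁,[A₁,[A₁,A₀]]] = 16·[A₁,A₀]. -/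

import Mathlib

section
variable {A : Type*} [Ring A] [Algebra ℂ A]

lemma mul_pow_smul (c : ℂ) (x y : A) (h : x*y = c • (y*x)) (l : ℕ) :
    x * y^l = c^l • (y^l * x) := by
  induction l with
  | zero => simp
  | succ l ih =>
    rw [pow_succ, ← mul_assoc, ih, smul_mul_assoc, mul_assoc, h, mul_smul_comm,
      smul_smul, pow_succ, ← mul_assoc]

lemma pow_mul_pow_smul (c : ℂ) (x y : A) (h : x*y = c • (y*x)) (m l : ℕ) :
    x^m * y^l = c^(m*l) • (y^l * x^m) := by
  induction m with
  | zero => simp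
  | succ m ih =>
    rw [pow_succ, mul_assoc, mul_pow_smul c x y h l, mul_smul_comm, ← mul_assoc, ih,
      smul_mul_assoc, smul_smul, ← pow_add, mul_assoc, ← pow_succ]
    rw [show l + m*l = (m+1)*l by ring]

end

lemma omega_pow (n k : ℕ) (hn : 2 ≤ n) (hk : n = 2 * k) (hkodd : Odd k)
    (ω : ℂ) (hω : ω = Complex.exp (2 * Real.pi * Complex.I / n)) (e : ℤ)
    (he : e = 1 ∨ e = -1) : (ω ^ e) ^ (k * k) = -1 := by
  have hk0 : (k:ℂ) ≠ 0 := by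
    have : 1 ≤ k := by omega
    exact_mod_cast Nat.cast_ne_zero.mpr (by omega)
  have hωk : ω ^ k = -1 := by
    rw [hω, ← Complex.exp_nat_mul]
    rw [show (k:ℂ) * (2 * Real.pi * Complex.I / n) = Real.pi * Complex.I by
      rw [hk]; push_cast; field_simp]
    exact Complex.exp_pi_mul_I
  have hkk : ω ^ (k * k) = -1 := by
    rw [pow_mul, hωk, hkodd.neg_one_pow]
  rcases he with rfl | rfl
  · simpa using hkk
  · rw [zpow_neg_one, inv_pow, hkk]
    norm_num


section
variable {A : Type*} [Ring A]

private lemma sw_anti {x y : A} (h : x*y = -(y*x)) (z : A) : x*(y*z) = -(y*(x*z)) := by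
  rw [← mul_assoc, h, neg_mul, mul_assoc]

private lemma sw_comm {x y : A} (h : x*y = y*x) (z : A) : x*(y*z) = y*(x*z) := by
  rw [← mul_assoc, h, mul_assoc]

private lemma sw_sq {x : A} (h : x*x = 1) (z : A) : x*(x*z) = z := by
  rw [← mul_assoc, h, one_mul]

private lemma key_dg (p q a R : A)
    (hp : p*p = 1) (hq : q*q = 1) (hpq : q*p = p*q)
    (hpa : p*a = -(a*p)) (hqa : q*a = -(a*q))
    (hRp : R*p = p*R) (hRq : R*q = q*R) (hRa : R*a = a*R) :
    ⁅p+q+R, ⁅p+q+R, ⁅p+q+R, a⁆⁆⁆ = (16:A) * ⁅p+q+R, a⁆ := by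
  simp only [Ring.lie_def, mul_add, add_mul, mul_sub, sub_mul, mul_assoc]
  simp only [sw_anti hpa, sw_anti hqa, sw_comm hRa, sw_comm hpq, sw_comm hRp, sw_comm hRq,
    sw_sq hp, sw_sq hq, hpa, hqa, hRa, hpq, hRp, hRq, hp, hq,
    mul_neg, neg_mul, neg_neg, mul_one, mul_add, mul_sub, add_mul, sub_mul, mul_assoc]
  noncomm_ring

private lemma lie_sum' {ι : Type*} (x : A) (s : Finset ι) (f : ι → A) :
    ⁅x, ∑ i ∈ s, f i⁆ = ∑ i ∈ s, ⁅x, f i⁆ := by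
  simp [Ring.lie_def, Finset.mul_sum, Finset.sum_mul, ← Finset.sum_sub_distrib]

end

section
variable (N : ℕ)

private lemma two_mul_ne_one (x : ZMod (2*N)) : 2*x ≠ 1 := by
  intro h
  have h2 : (2:ℕ) ∣ 2*N := dvd_mul_right 2 N
  have h' := congrArg (ZMod.castHom h2 (ZMod 2)) h
  rw [map_mul, map_one, map_ofNat, show ((2:ZMod 2)) = 0 from rfl, zero_mul] at h'
  exact absurd h' (by decide)

private lemma cast_double_inj (hN : 2 ≤ N) (i j : ℕ) (hi : i < N) (hj : j < N)
    (h : 2*(i : ZMod (2*N)) = 2*(j : ZMod (2*N))) : i = j := by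
  have h' : ((2*i : ℕ) : ZMod (2*N)) = ((2*j : ℕ) : ZMod (2*N)) := by push_cast; exact h
  rw [ZMod.natCast_eq_natCast_iff] at h'
  exact Nat.ModEq.eq_of_lt_of_lt (Nat.ModEq.mul_left_cancel' (by norm_num) h') hi hj

private lemma small_ne_zero (hN : 2 ≤ N) (m : ℕ) (hm : 0 < m) (hm' : m < 4) :
    (m : ZMod (2*N)) ≠ 0 := by
  rw [Ne, ZMod.natCast_eq_zero_iff]
  intro h
  have := Nat.le_of_dvd hm h
  omega

private lemma cast_mod_double (m : ℕ) :
    2*(((m % N : ℕ)) : ZMod (2*N)) = 2*((m:ℕ) : ZMod (2*N)) := by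
  have h0 : ((N : ZMod (2*N)) * 2) = 0 := by
    have := ZMod.natCast_self (2*N)
    push_cast at this
    linear_combination this
  conv_rhs => rw [← Nat.div_add_mod m N]
  push_cast
  linear_combination (-((m/N : ℕ) : ZMod (2*N))) * h0

end

private lemma master {A : Type*} [Ring A] [Algebra ℂ A] (N : ℕ) (hN : 2 ≤ N)
    (b : ZMod (2*N) → A)
    (hb2 : ∀ j, b j * b j = 1)
    (hba : ∀ j, b j * b (j+1) = -(b (j+1) * b j))
    (hbc : ∀ j l, l ≠ j+1 → l ≠ j-1 → b j * b l = b l * b j)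
    (S₀ S₁ : A)
    (hS₀ : S₀ = ∑ j ∈ Finset.range N, b (2*(j : ZMod (2*N))+1))
    (hS₁ : S₁ = ∑ j ∈ Finset.range N, b (2*(j : ZMod (2*N))+2)) :
    ⁅S₀, ⁅S₀, ⁅S₀, S₁⁆⁆⁆ = (16:ℂ) • ⁅S₀, S₁⁆ := by
  have h1 : (1 : ZMod (2*N)) ≠ 0 := by
    have := small_ne_zero N hN 1 (by norm_num) (by norm_num); push_cast at this; exact this
  have h3 : (3 : ZMod (2*N)) ≠ 0 := by
    have := small_ne_zero N hN 3 (by norm_num) (by norm_num); push_cast at this; exact this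
  -- odd sites pairwise commute
  have oddodd : ∀ i i' : ℕ, b (2*(i:ZMod (2*N))+1) * b (2*(i':ZMod (2*N))+1)
      = b (2*(i':ZMod (2*N))+1) * b (2*(i:ZMod (2*N))+1) := by
    intro i i'
    refine hbc _ _ (fun h => ?_) (fun h => ?_)
    · exact two_mul_ne_one N ((i':ZMod (2*N)) - i) (by push_cast; linear_combination h)
    · exact two_mul_ne_one N ((i:ZMod (2*N)) - i') (by push_cast; linear_combination -h)
  subst hS₁
  rw [lie_sum', lie_sum', lie_sum', Finset.smul_sum]
  refine Finset.sum_congr rfl (fun j hj => ?_)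
  rw [Finset.mem_range] at hj
  set p := b (2*(j:ZMod (2*N))+1) with hpdef
  set q := b (2*(j:ZMod (2*N))+3) with hqdef
  set a := b (2*(j:ZMod (2*N))+2) with hadef
  set j' := (j+1) % N with hj'def
  have hj'lt : j' < N := Nat.mod_lt _ (by omega)
  have hjj' : j ≠ j' := by
    intro h
    rcases Nat.lt_or_ge (j+1) N with hlt | hge
    · rw [hj'def, Nat.mod_eq_of_lt hlt] at h; omega
    · have hN1 : j + 1 = N := by omega
      rw [hj'def, hN1, Nat.mod_self] at h; omega
  have hq_eq : b (2*((j':ℕ):ZMod (2*N))+1) = q := by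
    rw [hqdef]
    congr 1
    rw [hj'def, cast_mod_double]
    push_cast; ring
  set R := ∑ i ∈ ((Finset.range N).erase j).erase j', b (2*(i:ZMod (2*N))+1) with hRdef
  have hsplit : S₀ = p + q + R := by
    rw [hS₀, ← Finset.add_sum_erase _ _ (Finset.mem_range.mpr hj),
      ← Finset.add_sum_erase _ _ (Finset.mem_erase.mpr ⟨(Ne.symm hjj'), Finset.mem_range.mpr hj'lt⟩),
      hq_eq, ← hRdef, ← hpdef]
    exact (add_assoc p q R).symm
  -- commutation of individual odd sites with a
  have hodd_a : ∀ i : ℕ, i < N → i ≠ j → i ≠ j' →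
      b (2*(i:ZMod (2*N))+1) * a = a * b (2*(i:ZMod (2*N))+1) := by
    intro i hi hij hij'
    refine hbc _ _ (fun h => ?_) (fun h => ?_)
    · -- 2j+2 = 2i+2  →  i = j
      exact hij (cast_double_inj N hN i j hi hj (by linear_combination -h))
    · -- 2j+2 = 2i  →  i = j'
      apply hij'
      have hc : 2*((i:ℕ):ZMod (2*N)) = 2*(((j+1:ℕ)):ZMod (2*N)) := by
        push_cast; linear_combination -h
      rw [← cast_mod_double N (j+1)] at hc
      exact cast_double_inj N hN i j' hi hj'lt hc
  have hp : p*p = 1 := hb2 _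
  have hq : q*q = 1 := hb2 _
  have hpq : q*p = p*q := by
    refine hbc _ _ (fun h => ?_) (fun h => ?_)
    · exact h3 (by linear_combination -h)
    · exact h1 (by linear_combination -h)
  have hpa : p*a = -(a*p) := by
    have := hba (2*(j:ZMod (2*N))+1)
    rw [show (2*(j:ZMod (2*N))+1)+1 = 2*(j:ZMod (2*N))+2 by ring] at this
    exact this
  have hqa : q*a = -(a*q) := by
    have := hba (2*(j:ZMod (2*N))+2)
    rw [show (2*(j:ZMod (2*N))+2)+1 = 2*(j:ZMod (2*N))+3 by ring] at this
    rw [this, neg_neg]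
  have hRmem : ∀ i ∈ ((Finset.range N).erase j).erase j', i < N ∧ i ≠ j ∧ i ≠ j' := by
    intro i hi
    rw [Finset.mem_erase, Finset.mem_erase, Finset.mem_range] at hi
    exact ⟨hi.2.2, hi.2.1, hi.1⟩
  have hRp : R*p = p*R := by
    rw [hRdef, Finset.sum_mul, Finset.mul_sum]
    exact Finset.sum_congr rfl (fun i _ => oddodd i j)
  have hRq : R*q = q*R := by
    rw [hRdef, Finset.sum_mul, Finset.mul_sum]
    refine Finset.sum_congr rfl (fun i _ => ?_)
    have := oddodd i (j+1)
    rw [show (2*((j+1:ℕ):ZMod (2*N))+1) = 2*(j:ZMod (2*N))+3 by push_cast; ring] at this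
    exact this
  have hRa : R*a = a*R := by
    rw [hRdef, Finset.sum_mul, Finset.mul_sum]
    refine Finset.sum_congr rfl (fun i hi => ?_)
    obtain ⟨h1', h2', h3'⟩ := hRmem i hi
    exact hodd_a i h1' h2' h3'
  rw [hsplit, show ((16:ℂ) • ⁅p+q+R, a⁆) = (16:A) * ⁅p+q+R, a⁆ by
    rw [Algebra.smul_def, map_ofNat]]
  exact key_dg p q a R hp hq hpq hpa hqa hRp hRq hRa


/-- remark after Corollary 1 of the paper: site-dependent
signs `ω^{±1}` are allowed.  Let `n ≥ 2` be even with `k = n/2` odd,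
`ω = exp(2πi/n)`, and let `η_j` (indexed cyclically mod `2N`, `N ≥ 2`) satisfy
`η_j η_{j+1} = ω^{ε_j} η_{j+1} η_j` with `ε_j ∈ {+1, −1}`, together with
`η_j η_k = η_k η_j` for `k ≢ j ± 1 (mod 2N)`, and `η_j^n = 1`.  Then
`A₀ = Σ η_{2j−1}^k` and `A₁ = Σ η_{2j}^k` satisfy the Dolan–Grady condition
with constant `C = 16`. -/
theorem dolan_grady_clock_half_odd_site_dependent_signs
    (n k : ℕ) (hn : 2 ≤ n) (hk : n = 2 * k) (hkodd : Odd k)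
    (N : ℕ) (hN : 2 ≤ N) (A : Type*) [Ring A] [Algebra ℂ A]
    (ω : ℂ) (hω : ω = Complex.exp (2 * Real.pi * Complex.I / n))
    (ε : ZMod (2 * N) → ℤ) (hε : ∀ j : ZMod (2 * N), ε j = 1 ∨ ε j = -1)
    (η : ZMod (2 * N) → A)
    (hanti : ∀ j : ZMod (2 * N), η j * η (j + 1) = ω ^ (ε j) • (η (j + 1) * η j))
    (hcomm : ∀ j l : ZMod (2 * N), l ≠ j + 1 → l ≠ j - 1 → η j * η l = η l * η j)
    (hpow : ∀ j : ZMod (2 * N), η j ^ n = 1)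
    (A₀ A₁ : A)
    (hA₀ : A₀ = ∑ j ∈ Finset.range N, η (2 * (j : ZMod (2 * N)) + 1) ^ k)
    (hA₁ : A₁ = ∑ j ∈ Finset.range N, η (2 * (j : ZMod (2 * N)) + 2) ^ k) :
    ⁅A₀, ⁅A₀, ⁅A₀, A₁⁆⁆⁆ = (16 : ℂ) • ⁅A₀, A₁⁆ ∧
    ⁅A₁, ⁅A₁, ⁅A₁, A₀⁆⁆⁆ = (16 : ℂ) • ⁅A₁, A₀⁆ := by
  set b : ZMod (2*N) → A := fun j => η j ^ k with hbdef
  have hb2 : ∀ j, b j * b j = 1 := by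
    intro j
    rw [hbdef]
    simp only
    rw [← pow_add, show k + k = n by omega, hpow]
  have hba : ∀ j, b j * b (j+1) = -(b (j+1) * b j) := by
    intro j
    have h := pow_mul_pow_smul (ω ^ (ε j)) (η j) (η (j+1)) (hanti j) k k
    rw [omega_pow n k hn hk hkodd ω hω (ε j) (hε j), neg_one_smul] at h
    exact h
  have hbc : ∀ j l, l ≠ j+1 → l ≠ j-1 → b j * b l = b l * b j := by
    intro j l h1 h2
    exact ((Commute.pow_pow (hcomm j l h1 h2 : Commute (η j) (η l)) k k) : _)
  have hS₀ : A₀ = ∑ j ∈ Finset.range N, b (2*(j : ZMod (2*N)) + 1) := hA₀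
  have hS₁ : A₁ = ∑ j ∈ Finset.range N, b (2*(j : ZMod (2*N)) + 2) := hA₁
  constructor
  · exact master N hN b hb2 hba hbc A₀ A₁ hS₀ hS₁
  · -- apply master to the shifted family
    have hz : 2*((N:ℕ) : ZMod (2*N)) = 0 := by
      have := ZMod.natCast_self (2*N)
      push_cast at this
      linear_combination this
    have hshift : (∑ j ∈ Finset.range N, b (2*(j : ZMod (2*N)) + 3))
        = ∑ j ∈ Finset.range N, b (2*(j : ZMod (2*N)) + 1) := by
      set F : ℕ → A := fun m => b (2*(m : ZMod (2*N)) + 1) with hFdef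
      have hstep : ∀ j : ℕ, b (2*(j : ZMod (2*N)) + 3) = F (j+1) := by
        intro j
        rw [hFdef]
        simp only
        congr 1
        push_cast
        ring
      have hFN : F N = F 0 := by
        rw [hFdef]
        simp only
        congr 1
        rw [Nat.cast_zero]
        linear_combination hz
      have h1 := Finset.sum_range_succ' F N
      have h2 := Finset.sum_range_succ F N
      rw [h2, hFN] at h1
      calc (∑ j ∈ Finset.range N, b (2*(j : ZMod (2*N)) + 3))
          = ∑ j ∈ Finset.range N, F (j+1) := Finset.sum_congr rfl (fun j _ => hstep j)
        _ = ∑ j ∈ Finset.range N, F j := by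
            exact (add_right_cancel h1).symm
    refine master N hN (fun j => b (j+1)) (fun j => hb2 (j+1)) (fun j => hba (j+1))
      (fun j l h1 h2 => hbc (j+1) (l+1) (fun h => h1 (by linear_combination h))
        (fun h => h2 (by linear_combination h))) A₁ A₀ ?_ ?_
    · rw [hS₁]
      refine Finset.sum_congr rfl (fun j _ => ?_)
      show b (2*(j : ZMod (2*N)) + 2) = b ((2*(j : ZMod (2*N)) + 1) + 1)
      congr 1
      ring
    · rw [hS₀, ← hshift]
      refine Finset.sum_congr rfl (fun j _ => ?_)
      show b (2*(j : ZMod (2*N)) + 3) = b ((2*(j : ZMod (2*N)) + 2) + 1)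
      congr 1
      ring
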